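/- Setup: let r ≥ 2 and s ≥ 1 be integers, let G be a finite simple graph on rs vertices with a distinguished vertex x, and let V_1, …, V_r be an almost equitable coloring of G − x with small class V_1, auxiliary digraph H, accessible classes A and non-accessible classes B, chosen so that no almost equitable coloring of G − x has more accessible classes. Let V_i be a terminal accessible class, let v ∈ V_i be an ordinary vertex, and let u ∈ Q'(v) lie in the class W_j ∈ B. If F_0(v) is nonempty, then W_j is not reachable from F_0(v) in H, i.e., there is no directed path in H from any class of F_0(v) to W_j. (This is Lemma 2.3(b) of the paper.) -/

import Mathlib

open scoped Classical

namespace Equitable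

variable {V : Type*}

/-- An equitable `r`-coloring of `G`: a proper coloring with `r` colors whose
color classes pairwise differ in size by at most `1`. -/
def IsEquitableColoring [Fintype V] (G : SimpleGraph V) (r : ℕ) (c : V → Fin r) : Prop :=
  (∀ u v : V, G.Adj u v → c u ≠ c v) ∧
  ∀ i j : Fin r,
    (Finset.univ.filter fun v => c v = i).card ≤
      (Finset.univ.filter fun v => c v = j).card + 1

/-- The number of edges of `G` with both endpoints in `S`. -/
noncomputable def edgesWithin [Fintype V] (G : SimpleGraph V) (S : Finset V) : ℕ :=
  (G.edgeFinset.filter fun e => ∀ v ∈ e, v ∈ S).card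

/-- The number of edges of `G` with one endpoint in `X` and the other in `Y`. -/
noncomputable def edgesBetween [Fintype V] (G : SimpleGraph V) (X Y : Finset V) : ℕ :=
  (G.edgeFinset.filter fun e => ∃ u ∈ X, ∃ w ∈ Y, e = s(u, w)).card

/-- The semi-planar edge bounds. -/
def SemiPlanarBounds [Fintype V] (G : SimpleGraph V) : Prop :=
  (∀ S : Finset V, edgesWithin G S ≤ 3 * S.card) ∧
  ∀ X Y : Finset V, Disjoint X Y → edgesBetween G X Y ≤ 2 * (X.card + Y.card)

/-- The planar edge bounds. -/
def PlanarBounds [Fintype V] (G : SimpleGraph V) : Prop :=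
  (∀ S : Finset V, 3 ≤ S.card → edgesWithin G S ≤ 3 * S.card - 6) ∧
  ∀ X Y : Finset V, Disjoint X Y → 3 ≤ X.card + Y.card →
    edgesBetween G X Y ≤ 2 * (X.card + Y.card) - 4

/-- The semi-planar bipartite edge bound. -/
def SemiPlanarBipBound [Fintype V] (G : SimpleGraph V) : Prop :=
  ∀ X Y : Finset V, Disjoint X Y → edgesBetween G X Y ≤ 2 * (X.card + Y.card)

/-- The planar bipartite edge bound. -/
def PlanarBipBound [Fintype V] (G : SimpleGraph V) : Prop :=
  ∀ X Y : Finset V, Disjoint X Y → 3 ≤ X.card + Y.card →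
    edgesBetween G X Y ≤ 2 * (X.card + Y.card) - 4

/-- `P` is an almost equitable coloring of `G − x`: a partition of `V(G) \ {x}` into `r`
independent sets, the small class `P 0` of size `s − 1` and the other classes of size `s`. -/
def AEColoring [Fintype V] (G : SimpleGraph V) (x : V) {r : ℕ} [NeZero r] (s : ℕ)
    (P : Fin r → Finset V) : Prop :=
  (∀ i j : Fin r, i ≠ j → Disjoint (P i) (P j)) ∧
  (∀ v : V, (∃ i, v ∈ P i) ↔ v ≠ x) ∧
  (∀ i : Fin r, ∀ u ∈ P i, ∀ w ∈ P i, ¬ G.Adj u w) ∧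
  (P 0).card = s - 1 ∧
  ∀ i : Fin r, i ≠ 0 → (P i).card = s

/-- The arc relation of the auxiliary digraph `H`: an arc from class `i` to class `j`
iff `i ≠ j` and some vertex of `P i` has no `G`-neighbor in `P j` (such a vertex
is a witness of the arc and is called movable to `P j`). -/
def Arc (G : SimpleGraph V) {r : ℕ} (P : Fin r → Finset V) (i j : Fin r) : Prop :=
  i ≠ j ∧ ∃ v ∈ P i, ∀ u ∈ P j, ¬ G.Adj v u

/-- A class is accessible if the auxiliary digraph has a directed path (possibly of
length `0`) from it to the small class `P 0`. -/
def Accessible (G : SimpleGraph V) {r : ℕ} [NeZero r] (P : Fin r → Finset V)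
    (i : Fin r) : Prop :=
  Relation.ReflTransGen (Arc G P) i 0

/-- The number of accessible classes. -/
noncomputable def accCount (G : SimpleGraph V) {r : ℕ} [NeZero r]
    (P : Fin r → Finset V) : ℕ :=
  (Finset.univ.filter fun i => Accessible G P i).card

/-- No almost equitable coloring of `G − x` has more accessible classes than `P`. -/
def MaxAccessible [Fintype V] (G : SimpleGraph V) (x : V) {r : ℕ} [NeZero r] (s : ℕ)
    (P : Fin r → Finset V) : Prop :=
  ∀ P' : Fin r → Finset V, AEColoring G x s P' → accCount G P' ≤ accCount G P

/-- Class `i` blocks class `j` if `i ≠ j` and the auxiliary digraph minus the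
class `i` has no directed path from `j` to the small class `P 0`. -/
def Blocks (G : SimpleGraph V) {r : ℕ} [NeZero r] (P : Fin r → Finset V)
    (i j : Fin r) : Prop :=
  i ≠ j ∧ ¬ Relation.ReflTransGen (fun p q => Arc G P p q ∧ p ≠ i ∧ q ≠ i) j 0

/-- An accessible class is terminal if it blocks no accessible class. -/
def Terminal (G : SimpleGraph V) {r : ℕ} [NeZero r] (P : Fin r → Finset V)
    (i : Fin r) : Prop :=
  Accessible G P i ∧ ∀ j : Fin r, Accessible G P j → ¬ Blocks G P i j

/-- `u` is a solo neighbor of `v` (where `v` lies in the accessible class `P i`):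
`u` lies in a non-accessible class, is adjacent to `v`, and `v` is the unique
neighbor of `u` in `P i`.  `Q(v)` is the set of such `u`. -/
def SoloNbr (G : SimpleGraph V) {r : ℕ} [NeZero r] (P : Fin r → Finset V)
    (i : Fin r) (v u : V) : Prop :=
  (∃ k : Fin r, ¬ Accessible G P k ∧ u ∈ P k) ∧ G.Adj v u ∧
    ∀ w ∈ P i, G.Adj u w → w = v

/-- `u ∈ Q'(v)`: `u` is a solo neighbor of `v` that is non-adjacent to some other
solo neighbor of `v`. -/
def InQ' (G : SimpleGraph V) {r : ℕ} [NeZero r] (P : Fin r → Finset V)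
    (i : Fin r) (v u : V) : Prop :=
  SoloNbr G P i v u ∧ ∃ u' : V, SoloNbr G P i v u' ∧ u' ≠ u ∧ ¬ G.Adj u u'

/-- A vertex `v` of a terminal accessible class `P i` is ordinary if some other vertex of
`P i` is movable to another accessible class, or there are at most two accessible classes. -/
def Ordinary (G : SimpleGraph V) {r : ℕ} [NeZero r] (P : Fin r → Finset V)
    (i : Fin r) (v : V) : Prop :=
  (∃ v' ∈ P i, v' ≠ v ∧
    ∃ j : Fin r, j ≠ i ∧ Accessible G P j ∧ ∀ w ∈ P j, ¬ G.Adj v' w) ∨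
  accCount G P ≤ 2

/-- The strong component of the auxiliary digraph containing class `i`. -/
noncomputable def strongComp (G : SimpleGraph V) {r : ℕ} (P : Fin r → Finset V)
    (i : Fin r) : Finset (Fin r) :=
  Finset.univ.filter fun j =>
    Relation.ReflTransGen (Arc G P) i j ∧ Relation.ReflTransGen (Arc G P) j i



section ListHelpers
variable {α : Type*} {rel rel' : α → α → Prop}

theorem chain_imp_mem {a : α} {l : List α} (h : List.Chain rel a l)
    (H : ∀ p q, p ∈ a :: l → q ∈ a :: l → rel p q → rel' p q) : List.Chain rel' a l := by
  induction l generalizing a with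
  | nil => exact List.Chain.nil
  | cons c t ih =>
    rcases List.chain_cons.1 h with ⟨hac, hct⟩
    exact List.Chain.cons (H a c (by simp) (by simp) hac)
      (ih hct (fun p q hp hq => H p q (List.mem_cons_of_mem a hp) (List.mem_cons_of_mem a hq)))

theorem chain_reach {a : α} {l : List α} (h : List.Chain rel a l) :
    ∀ c ∈ l, Relation.ReflTransGen rel a c := by
  induction l generalizing a with
  | nil => simp
  | cons c t ih =>
    rcases List.chain_cons.1 h with ⟨hac, hct⟩
    intro d hd
    rcases List.mem_cons.1 hd with rfl | hd
    · exact Relation.ReflTransGen.single hac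
    · exact (Relation.ReflTransGen.single hac).trans (ih hct d hd)

theorem exists_nodup_chain' {a : α} {l : List α} (h : List.Chain rel a l) :
    ∃ l', List.Chain rel a l' ∧
      (a :: l').getLast? = (a :: l).getLast? ∧
      (a :: l').Nodup := by
  induction l generalizing a with
  | nil => exact ⟨[], List.Chain.nil, rfl, by simp⟩
  | cons c t ih =>
    rcases List.chain_cons.1 h with ⟨hac, hct⟩
    obtain ⟨t', ht'c, ht'last, ht'nd⟩ := ih hct
    by_cases ha : a ∈ c :: t'
    · obtain ⟨s₁, s₂, hsplit⟩ := List.append_of_mem ha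
      have hch' : List.Chain' rel (c :: t') := ht'c
      have hsuf : (a :: s₂) <:+ (c :: t') := ⟨s₁, hsplit.symm⟩
      have hch2 : List.Chain rel a s₂ := hch'.suffix hsuf
      refine ⟨s₂, hch2, ?_, ht'nd.sublist hsuf.sublist⟩
      have h1 : (c :: t').getLast? = (a :: s₂).getLast? := by
        rw [hsplit]
        exact (List.getLast?_append_of_ne_nil s₁ (by simp))
      have h2 : ((a:α) :: c :: t).getLast? = (c :: t).getLast? := by
        simp [List.getLast?_cons_cons]
      rw [h2, ← ht'last, ← h1]
    · refine ⟨c :: t', List.Chain.cons hac ht'c, ?_, by simp [ha, ht'nd]⟩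
      simp only [List.getLast?_cons_cons]
      exact ht'last

end ListHelpers

/-- Rotation of vertices along a (nodup) directed path of classes in the auxiliary
digraph. -/
theorem rotate_exists (G : SimpleGraph V) {r : ℕ} :
    ∀ (cs : List (Fin r)) (hne : cs ≠ []) (R : Fin r → Finset V),
      (∀ c c' : Fin r, c ≠ c' → Disjoint (R c) (R c')) →
      (∀ c : Fin r, ∀ z ∈ R c, ∀ z' ∈ R c, ¬ G.Adj z z') →
      cs.Chain' (Arc G R) → cs.Nodup →
      ∀ (y : V), (∀ c, y ∉ R c) → (∀ z ∈ R (cs.head hne), ¬ G.Adj y z) →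
      ∃ Q : Fin r → Finset V,
        (∀ c, c ∉ cs → Q c = R c) ∧
        (∀ c ∈ cs, ∀ z ∈ Q c, ∀ z' ∈ Q c, ¬ G.Adj z z') ∧
        (∀ c ∈ cs, c ≠ cs.getLast hne → (Q c).card = (R c).card) ∧
        ((Q (cs.getLast hne)).card = (R (cs.getLast hne)).card + 1) ∧
        (∀ z : V, (∃ c ∈ cs, z ∈ Q c) ↔ (z = y ∨ ∃ c ∈ cs, z ∈ R c)) ∧
        (∀ c c', c ≠ c' → Disjoint (Q c) (Q c')) ∧
        (y ∈ Q (cs.head hne)) ∧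
        (R (cs.getLast hne) ⊆ Q (cs.getLast hne)) ∧
        (∀ c c' cs', cs = c :: c' :: cs' →
          ∃ t ∈ Q c', t ∈ R c ∧ ∀ z ∈ Q c, ¬ G.Adj t z) := by
  intro cs
  induction cs with
  | nil => intro hne; exact absurd rfl hne
  | cons c tail ih =>
    intro hne R hdisj hind hch hnd y hy hyh
    have hyh' : ∀ z ∈ R c, ¬ G.Adj y z := hyh
    cases tail with
    | nil =>
      classical
      set Q : Fin r → Finset V := fun d => if d = c then insert y (R c) else R d with hQdef
      have hQc : Q c = insert y (R c) := by simp [hQdef]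
      have hQne : ∀ d, d ≠ c → Q d = R d := fun d hd => by simp [hQdef, hd]
      have hlast : ([c] : List (Fin r)).getLast (List.cons_ne_nil _ _) = c := rfl
      refine ⟨Q, ?_, ?_, ?_, ?_, ?_, ?_, ?_, ?_, ?_⟩
      · intro d hd
        exact hQne d (by simpa using hd)
      · intro d hd
        have hdc : d = c := by simpa using hd
        rw [hdc, hQc]
        intro z hz z' hz'
        rcases Finset.mem_insert.1 hz with hzy | hz
        · rcases Finset.mem_insert.1 hz' with hzy' | hz'
          · rw [hzy, hzy']; exact fun h => G.ne_of_adj h rfl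
          · rw [hzy]; exact hyh' z' hz'
        · rcases Finset.mem_insert.1 hz' with hzy' | hz'
          · rw [hzy']; exact fun h => hyh' z hz h.symm
          · exact hind c z hz z' hz'
      · intro d hd hdl
        rw [hlast] at hdl
        exact absurd (by simpa using hd) hdl
      · rw [hlast, hQc]
        exact Finset.card_insert_of_notMem (hy c)
      · intro z
        constructor
        · rintro ⟨d, hd, hz⟩
          have hdc : d = c := by simpa using hd
          rw [hdc, hQc] at hz
          rcases Finset.mem_insert.1 hz with rfl | hz
          · exact Or.inl rfl
          · exact Or.inr ⟨c, by simp, hz⟩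
        · rintro (rfl | ⟨d, hd, hz⟩)
          · exact ⟨c, by simp, by rw [hQc]; exact Finset.mem_insert_self _ _⟩
          · have hdc : d = c := by simpa using hd
            rw [hdc] at hz
            exact ⟨c, by simp, by rw [hQc]; exact Finset.mem_insert_of_mem hz⟩
      · intro d d' hdd'
        rw [Finset.disjoint_left]
        intro z hz hz'
        by_cases hdc : d = c <;> by_cases hd'c : d' = c
        · exact hdd' (hdc.trans hd'c.symm)
        · rw [hdc, hQc] at hz
          rw [hQne d' hd'c] at hz'
          rcases Finset.mem_insert.1 hz with rfl | hz
          · exact hy d' hz'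
          · exact Finset.disjoint_left.1 (hdisj c d' (fun h => hd'c h.symm)) hz hz'
        · rw [hd'c, hQc] at hz'
          rw [hQne d hdc] at hz
          rcases Finset.mem_insert.1 hz' with rfl | hz'
          · exact hy d hz
          · exact Finset.disjoint_left.1 (hdisj d c hdc) hz hz'
        · rw [hQne d hdc] at hz
          rw [hQne d' hd'c] at hz'
          exact Finset.disjoint_left.1 (hdisj d d' hdd') hz hz'
      · show y ∈ Q c
        rw [hQc]; exact Finset.mem_insert_self _ _
      · rw [hlast, hQc]
        exact fun z hz => Finset.mem_insert_of_mem hz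
      · intro d d' ds h
        simp at h
    | cons c' cs' =>
      classical
      obtain ⟨harc, hch'⟩ := List.isChain_cons_cons.1 hch
      obtain ⟨hcc', w, hwRc, hw⟩ := harc
      have hcnotin : c ∉ c' :: cs' := (List.nodup_cons.1 hnd).1
      set R' : Fin r → Finset V := fun d => if d = c then (R c).erase w else R d with hR'
      have hR'c : R' c = (R c).erase w := by simp [hR']
      have hR'ne : ∀ d, d ≠ c → R' d = R d := fun d hd => by simp [hR', hd]
      have hR'tail : ∀ d ∈ c' :: cs', R' d = R d :=
        fun d hd => hR'ne d (fun h => hcnotin (h ▸ hd))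
      have hR'sub : ∀ d, R' d ⊆ R d := by
        intro d
        by_cases hdc : d = c
        · rw [hdc, hR'c]; exact Finset.erase_subset _ _
        · rw [hR'ne d hdc]
      have hdisj' : ∀ d d' : Fin r, d ≠ d' → Disjoint (R' d) (R' d') :=
        fun d d' h => Finset.disjoint_of_subset_left (hR'sub d)
          (Finset.disjoint_of_subset_right (hR'sub d') (hdisj d d' h))
      have hind' : ∀ d : Fin r, ∀ z ∈ R' d, ∀ z' ∈ R' d, ¬ G.Adj z z' :=
        fun d z hz z' hz' => hind d z (hR'sub d hz) z' (hR'sub d hz')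
      have hch'' : (c' :: cs').Chain' (Arc G R') := by
        show List.Chain (Arc G R') c' cs'
        refine chain_imp_mem hch' ?_
        intro p q hp hq hpq
        obtain ⟨hpq1, t, ht, ht2⟩ := hpq
        rw [← hR'tail p hp] at ht
        refine ⟨hpq1, t, ht, ?_⟩
        rw [hR'tail q hq]
        exact ht2
      have hy' : ∀ d, w ∉ R' d := by
        intro d
        by_cases hdc : d = c
        · rw [hdc, hR'c]; simp
        · rw [hR'ne d hdc]
          exact fun hmem => Finset.disjoint_left.1 (hdisj d c hdc) hmem hwRc
      have hyh'' : ∀ z ∈ R' ((c' :: cs').head (List.cons_ne_nil _ _)), ¬ G.Adj w z := by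
        simp only [List.head_cons]
        rw [hR'tail c' (by simp)]
        exact hw
      obtain ⟨Q₀, h1, h2, h3, h4, h5, h6, h7, h8, h9⟩ :=
        ih (List.cons_ne_nil _ _) R' hdisj' hind' hch''
          ((List.nodup_cons.1 hnd).2) w hy' hyh''
      have hlast_eq : (c :: c' :: cs').getLast hne =
          (c' :: cs').getLast (List.cons_ne_nil _ _) := List.getLast_cons_cons
      have hlmem : (c' :: cs').getLast (List.cons_ne_nil _ _) ∈ c' :: cs' :=
        List.getLast_mem _
      have hlne : (c' :: cs').getLast (List.cons_ne_nil _ _) ≠ c :=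
        fun h => hcnotin (h ▸ hlmem)
      have hywne : y ≠ w := fun h => hy c (h ▸ hwRc)
      set Q : Fin r → Finset V := fun d => if d = c then insert y ((R c).erase w) else Q₀ d
        with hQdef
      have hQc : Q c = insert y ((R c).erase w) := by simp [hQdef]
      have hQne : ∀ d, d ≠ c → Q d = Q₀ d := fun d hd => by simp [hQdef, hd]
      have hQtail : ∀ d ∈ c' :: cs', Q d = Q₀ d :=
        fun d hd => hQne d (fun h => hcnotin (h ▸ hd))
      refine ⟨Q, ?_, ?_, ?_, ?_, ?_, ?_, ?_, ?_, ?_⟩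
      · intro d hd
        simp only [List.mem_cons, not_or] at hd
        rw [hQne d hd.1, h1 d (by simp [hd.2.1, hd.2.2]), hR'ne d hd.1]
      · intro d hd
        rcases List.mem_cons.1 hd with hdc | hd
        · rw [hdc, hQc]
          intro z hz z' hz'
          rcases Finset.mem_insert.1 hz with hzy | hz
          · rcases Finset.mem_insert.1 hz' with hzy' | hz'
            · rw [hzy, hzy']; exact fun h => G.ne_of_adj h rfl
            · rw [hzy]; exact hyh' z' (Finset.mem_of_mem_erase hz')
          · rcases Finset.mem_insert.1 hz' with hzy' | hz'
            · rw [hzy']; exact fun h => hyh' z (Finset.mem_of_mem_erase hz) h.symm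
            · exact hind c z (Finset.mem_of_mem_erase hz) z' (Finset.mem_of_mem_erase hz')
        · rw [hQtail d hd]
          exact h2 d hd
      · intro d hd hdl
        rw [hlast_eq] at hdl
        rcases List.mem_cons.1 hd with hdc | hd
        · rw [hdc, hQc]
          have hcard1 : 1 ≤ (R c).card := Finset.card_pos.2 ⟨w, hwRc⟩
          rw [Finset.card_insert_of_notMem (fun h => hy c (Finset.mem_of_mem_erase h)),
            Finset.card_erase_of_mem hwRc]
          omega
        · rw [hQtail d hd, h3 d hd hdl, hR'tail d hd]
      · rw [hlast_eq, hQtail _ hlmem, h4, hR'tail _ hlmem]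
      · intro z
        constructor
        · rintro ⟨d, hd, hz⟩
          rcases List.mem_cons.1 hd with hdc | hd
          · rw [hdc, hQc] at hz
            rcases Finset.mem_insert.1 hz with rfl | hz
            · exact Or.inl rfl
            · exact Or.inr ⟨c, by simp, Finset.mem_of_mem_erase hz⟩
          · rw [hQtail d hd] at hz
            rcases (h5 z).1 ⟨d, hd, hz⟩ with rfl | ⟨d', hd', hz'⟩
            · exact Or.inr ⟨c, by simp, hwRc⟩
            · exact Or.inr ⟨d', List.mem_cons_of_mem _ hd', (hR'tail d' hd') ▸ hz'⟩
        · rintro (rfl | ⟨d, hd, hz⟩)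
          · exact ⟨c, by simp, by rw [hQc]; exact Finset.mem_insert_self _ _⟩
          · rcases List.mem_cons.1 hd with hdc | hd
            · rw [hdc] at hz
              by_cases hzw : z = w
              · subst hzw
                obtain ⟨d', hd', hz'⟩ := (h5 z).2 (Or.inl rfl)
                exact ⟨d', List.mem_cons_of_mem _ hd', by rw [hQtail d' hd']; exact hz'⟩
              · refine ⟨c, by simp, ?_⟩
                rw [hQc]
                exact Finset.mem_insert_of_mem (Finset.mem_erase.2 ⟨hzw, hz⟩)
            · obtain ⟨d', hd', hz'⟩ := (h5 z).2 (Or.inr ⟨d, hd, (hR'tail d hd).symm ▸ hz⟩)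
              exact ⟨d', List.mem_cons_of_mem _ hd', by rw [hQtail d' hd']; exact hz'⟩
      · intro d d' hdd'
        rw [Finset.disjoint_left]
        intro z hz hz'
        by_cases hdc : d = c <;> by_cases hd'c : d' = c
        · exact hdd' (hdc.trans hd'c.symm)
        · rw [hdc, hQc] at hz
          rw [hQne d' hd'c] at hz'
          by_cases hd't : d' ∈ c' :: cs'
          · rcases (h5 z).1 ⟨d', hd't, hz'⟩ with rfl | ⟨e, he, hze⟩
            · rcases Finset.mem_insert.1 hz with rfl | hz
              · exact hywne rfl
              · exact (Finset.mem_erase.1 hz).1 rfl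
            · have hec : e ≠ c := fun h => hcnotin (h ▸ he)
              rcases Finset.mem_insert.1 hz with rfl | hz
              · exact hy e (hR'sub e hze)
              · exact Finset.disjoint_left.1 (hdisj c e (fun h => hec h.symm))
                  (Finset.mem_of_mem_erase hz) (hR'sub e hze)
          · rw [h1 d' hd't, hR'ne d' hd'c] at hz'
            rcases Finset.mem_insert.1 hz with rfl | hz
            · exact hy d' hz'
            · exact Finset.disjoint_left.1 (hdisj c d' (fun h => hd'c h.symm))
                (Finset.mem_of_mem_erase hz) hz'
        · rw [hd'c, hQc] at hz'
          rw [hQne d hdc] at hz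
          by_cases hdt : d ∈ c' :: cs'
          · rcases (h5 z).1 ⟨d, hdt, hz⟩ with rfl | ⟨e, he, hze⟩
            · rcases Finset.mem_insert.1 hz' with rfl | hz'
              · exact hywne rfl
              · exact (Finset.mem_erase.1 hz').1 rfl
            · have hec : e ≠ c := fun h => hcnotin (h ▸ he)
              rcases Finset.mem_insert.1 hz' with rfl | hz'
              · exact hy e (hR'sub e hze)
              · exact Finset.disjoint_left.1 (hdisj e c hec) (hR'sub e hze)
                  (Finset.mem_of_mem_erase hz')
          · rw [h1 d hdt, hR'ne d hdc] at hz
            rcases Finset.mem_insert.1 hz' with rfl | hz'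
            · exact hy d hz
            · exact Finset.disjoint_left.1 (hdisj d c hdc) hz
                (Finset.mem_of_mem_erase hz')
        · rw [hQne d hdc] at hz
          rw [hQne d' hd'c] at hz'
          exact Finset.disjoint_left.1 (h6 d d' hdd') hz hz'
      · show y ∈ Q c
        rw [hQc]; exact Finset.mem_insert_self _ _
      · rw [hlast_eq, hQtail _ hlmem]
        intro z hz
        exact h8 ((hR'tail _ hlmem).symm ▸ hz)
      · intro d d' ds h
        obtain ⟨hd1, hd2⟩ : c = d ∧ c' :: cs' = d' :: ds := List.cons_eq_cons.1 h
        obtain ⟨hd3, _⟩ : c' = d' ∧ cs' = ds := List.cons_eq_cons.1 hd2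
        have hc'c : c' ≠ c := fun h => hcc' h.symm
        refine ⟨w, ?_, hd1 ▸ hwRc, ?_⟩
        · rw [← hd3, hQne c' hc'c]
          exact h7
        · intro z hz
          rw [← hd1, hQc] at hz
          rcases Finset.mem_insert.1 hz with rfl | hz
          · exact fun h => hyh' w hwRc h.symm
          · exact hind c w hwRc z (Finset.mem_of_mem_erase hz)

/-- **Lemma 2.3(b).** Let `P` be an almost equitable coloring of `G − x` maximizing the
number of accessible classes, let `v` be an ordinary vertex of a terminal accessible
class `P i`, and let `u ∈ Q'(v)` lie in the non-accessible class `P j`.  If `F₀(v)`,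
the set of non-accessible classes containing no neighbor of `v`, is nonempty, then
`P j` is not reachable from `F₀(v)` in the auxiliary digraph. -/
theorem solo_class_not_reachable_from_F0 (V : Type*) [Fintype V] (G : SimpleGraph V)
    (x : V) (r s : ℕ) [NeZero r] (hr : 2 ≤ r) (hs : 1 ≤ s)
    (hcard : Fintype.card V = r * s)
    (P : Fin r → Finset V) (hP : AEColoring G x s P)
    (hmax : MaxAccessible G x s P)
    (i : Fin r) (hterm : Terminal G P i)
    (v : V) (hv : v ∈ P i) (hord : Ordinary G P i v)
    (u : V) (j : Fin r) (hu : u ∈ P j) (hjB : ¬ Accessible G P j)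
    (huQ' : InQ' G P i v u)
    (hF0 : ∃ k : Fin r, ¬ Accessible G P k ∧ ∀ w ∈ P k, ¬ G.Adj v w) :
    ∀ k : Fin r, (¬ Accessible G P k ∧ ∀ w ∈ P k, ¬ G.Adj v w) →
      ¬ Relation.ReflTransGen (Arc G P) k j := by
  classical
  obtain ⟨hPdisj, hPmem, hPind, hP0, hPs⟩ := hP
  intro k hk hreach
  obtain ⟨hkB, hkF⟩ := hk
  have hiA : Accessible G P i := hterm.1
  have h0A : Accessible G P 0 := Relation.ReflTransGen.refl
  obtain ⟨⟨husolo1, hadjvu, hsolo_u⟩, u', ⟨⟨b', hb'B, hu'b'⟩, hadjvu', hsolo_u'⟩, hu'ne, hnadj⟩ :=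
    huQ'
  have hjne_i : j ≠ i := fun h => hjB (h ▸ hiA)
  have hine_j : i ≠ j := fun h => hjne_i h.symm
  have hkj : k ≠ j := by
    rintro rfl
    exact hkF u hu hadjvu
  have hBreach : ∀ c, Relation.ReflTransGen (Arc G P) k c → ¬ Accessible G P c :=
    fun c h hc => hkB (h.trans hc)
  obtain ⟨l₀, hl₀c, hl₀last⟩ := List.exists_isChain_cons_of_relationReflTransGen hreach
  obtain ⟨L, hLc, hLlastq, hLnd⟩ := exists_nodup_chain' hl₀c
  have hLlast : (k :: L).getLast (List.cons_ne_nil _ _) = j := by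
    have e1 : (k :: l₀).getLast? = some j := by
      rw [List.getLast?_eq_getLast (List.cons_ne_nil _ _), hl₀last]
    have e2 : (k :: L).getLast? = some ((k :: L).getLast (List.cons_ne_nil _ _)) :=
      List.getLast?_eq_getLast _
    rw [hLlastq, e1] at e2
    exact (Option.some.inj e2).symm
  have hLne : L ≠ [] := by
    intro h
    subst h
    exact hkj hLlast
  set cs : List (Fin r) := k :: L with hcs
  have hcsne : cs ≠ [] := List.cons_ne_nil _ _
  have hhead : cs.head hcsne = k := rfl
  have hcslast : cs.getLast hcsne = j := hLlast
  have hkmem : k ∈ cs := by simp [hcs]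
  have hjmem : j ∈ cs := hcslast ▸ List.getLast_mem hcsne
  have hcsB : ∀ c ∈ cs, ¬ Accessible G P c := by
    intro c hc
    rcases List.mem_cons.1 hc with rfl | hc
    · exact hkB
    · exact hBreach c (chain_reach hLc c hc)
  have hacc_notin : ∀ X, Accessible G P X → X ∉ cs := fun X hX hXcs => hcsB X hXcs hX
  have hi_notin : i ∉ cs := hacc_notin i hiA
  have h0_notin : (0 : Fin r) ∉ cs := hacc_notin 0 h0A
  have hkne_i : k ≠ i := fun h => hi_notin (h ▸ hkmem)
  set Pt : Fin r → Finset V := fun c => if c = i then (P i).erase v else P c with hPt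
  have hPti : Pt i = (P i).erase v := by simp [hPt]
  have hPtne : ∀ c, c ≠ i → Pt c = P c := fun c hc => by simp [hPt, hc]
  have hPtsub : ∀ c, Pt c ⊆ P c := by
    intro c; by_cases hc : c = i
    · rw [hc, hPti]; exact Finset.erase_subset _ _
    · rw [hPtne c hc]
  have hPtdisj : ∀ c c' : Fin r, c ≠ c' → Disjoint (Pt c) (Pt c') :=
    fun c c' h => Finset.disjoint_of_subset_left (hPtsub c)
      (Finset.disjoint_of_subset_right (hPtsub c') (hPdisj c c' h))
  have hPtind : ∀ c : Fin r, ∀ z ∈ Pt c, ∀ z' ∈ Pt c, ¬ G.Adj z z' :=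
    fun c z hz z' hz' => hPind c z (hPtsub c hz) z' (hPtsub c hz')
  have hPt_cs : ∀ c ∈ cs, Pt c = P c := fun c hc => hPtne c (fun h => hi_notin (h ▸ hc))
  have hchPt : cs.Chain' (Arc G Pt) := by
    show List.Chain (Arc G Pt) k L
    refine chain_imp_mem hLc ?_
    intro p q hp hq hpq
    obtain ⟨h1, t, ht, ht2⟩ := hpq
    refine ⟨h1, t, ?_, ?_⟩
    · rw [hPt_cs p hp]; exact ht
    · rw [hPt_cs q hq]; exact ht2
  have hyPt : ∀ c, v ∉ Pt c := by
    intro c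
    by_cases hc : c = i
    · rw [hc, hPti]; simp
    · rw [hPtne c hc]
      exact fun hmem => Finset.disjoint_left.1 (hPdisj c i hc) hmem hv
  have hyhPt : ∀ z ∈ Pt (cs.head hcsne), ¬ G.Adj v z := by
    rw [hhead, hPt_cs k hkmem]
    exact hkF
  obtain ⟨Q, hQ1, hQ2, hQ3, hQ4, hQ5, hQ6, hQ7, hQ8, hQ9⟩ :=
    rotate_exists G cs hcsne Pt hPtdisj hPtind hchPt hLnd v hyPt hyhPt
  rw [hcslast] at hQ3 hQ4 hQ8
  rw [hhead] at hQ7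
  set P' : Fin r → Finset V := fun c =>
    if c = i then insert u ((P i).erase v) else if c = j then (Q j).erase u else Q c with hP'def
  have hP'i : P' i = insert u ((P i).erase v) := by simp [hP'def]
  have hP'j : P' j = (Q j).erase u := by simp [hP'def, hjne_i]
  have hP'other : ∀ c, c ≠ i → c ≠ j → P' c = Q c := fun c h1 h2 => by simp [hP'def, h1, h2]
  have hP'sub : ∀ c, c ≠ i → P' c ⊆ Q c := by
    intro c h1
    by_cases h2 : c = j
    · rw [h2, hP'j]; exact Finset.erase_subset _ _
    · rw [hP'other c h1 h2]
  have hP'out : ∀ c, c ∉ cs → c ≠ i → P' c = P c := by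
    intro c h1 h2
    rw [hP'other c h2 (fun h => h1 (h ▸ hjmem)), hQ1 c h1, hPtne c h2]
  have huQj : u ∈ Q j := hQ8 (by rw [hPt_cs j hjmem]; exact hu)
  have huQonly : ∀ c, c ≠ j → u ∉ Q c :=
    fun c hc hmem => Finset.disjoint_left.1 (hQ6 c j hc) hmem huQj
  have hvQk : v ∈ Q k := hQ7
  have hQout_indep : ∀ c, c ∉ cs → ∀ z ∈ Q c, ∀ z' ∈ Q c, ¬ G.Adj z z' := by
    intro c hc
    rw [hQ1 c hc]
    exact hPtind c
  have hu_ne_x : u ≠ x := (hPmem u).1 ⟨j, hu⟩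
  have hv_ne_x : v ≠ x := (hPmem v).1 ⟨i, hv⟩
  have hu_notin_Pi : u ∉ P i := Finset.disjoint_left.1 (hPdisj j i hjne_i) hu
  have hP'AE : AEColoring G x s P' := by
    refine ⟨?_, ?_, ?_, ?_, ?_⟩
    · intro c c' hcc'
      rw [Finset.disjoint_left]
      intro z hz hz'
      by_cases hc : c = i
      · rw [hc, hP'i] at hz
        have hc'i : c' ≠ i := fun h => hcc' (hc.trans h.symm)
        rcases Finset.mem_insert.1 hz with hzu | hz
        · subst hzu
          by_cases hc'j : c' = j
          · rw [hc'j, hP'j] at hz'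
            exact (Finset.mem_erase.1 hz').1 rfl
          · exact huQonly c' hc'j (hP'sub c' hc'i hz')
        · have hzQi : z ∈ Q i := by
            rw [hQ1 i hi_notin, hPti]
            exact hz
          exact Finset.disjoint_left.1 (hQ6 i c' (fun h => hc'i h.symm)) hzQi
            (hP'sub c' hc'i hz')
      · by_cases hc' : c' = i
        · rw [hc', hP'i] at hz'
          rcases Finset.mem_insert.1 hz' with hzu | hz'
          · subst hzu
            by_cases hcj : c = j
            · rw [hcj, hP'j] at hz
              exact (Finset.mem_erase.1 hz).1 rfl
            · exact huQonly c hcj (hP'sub c hc hz)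
          · have hzQi : z ∈ Q i := by
              rw [hQ1 i hi_notin, hPti]; exact hz'
            exact Finset.disjoint_left.1 (hQ6 i c (fun h => hc h.symm)) hzQi (hP'sub c hc hz)
        · exact Finset.disjoint_left.1 (hQ6 c c' hcc') (hP'sub c hc hz) (hP'sub c' hc' hz')
    · intro z
      constructor
      · rintro ⟨c, hz⟩
        by_cases hc : c = i
        · rw [hc, hP'i] at hz
          rcases Finset.mem_insert.1 hz with hzu | hz
          · rw [hzu]; exact hu_ne_x
          · exact (hPmem z).1 ⟨i, Finset.mem_of_mem_erase hz⟩
        · have hzQ : z ∈ Q c := hP'sub c hc hz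
          by_cases hccs : c ∈ cs
          · rcases (hQ5 z).1 ⟨c, hccs, hzQ⟩ with hzv | ⟨d, hd, hzd⟩
            · rw [hzv]; exact hv_ne_x
            · exact (hPmem z).1 ⟨d, hPtsub d hzd⟩
          · rw [hQ1 c hccs] at hzQ
            exact (hPmem z).1 ⟨c, hPtsub c hzQ⟩
      · intro hzx
        obtain ⟨c₀, hz⟩ := (hPmem z).2 hzx
        by_cases hzu : z = u
        · exact ⟨i, by rw [hP'i, hzu]; exact Finset.mem_insert_self _ _⟩
        · by_cases hzv : z = v
          · refine ⟨k, ?_⟩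
            rw [hP'other k hkne_i hkj, hzv]
            exact hvQk
          · by_cases hc₀ : c₀ = i
            · refine ⟨i, ?_⟩
              rw [hP'i]
              exact Finset.mem_insert_of_mem (Finset.mem_erase.2 ⟨hzv, hc₀ ▸ hz⟩)
            · by_cases hc₀cs : c₀ ∈ cs
              · obtain ⟨d, hd, hzd⟩ := (hQ5 z).2
                  (Or.inr ⟨c₀, hc₀cs, by rw [hPt_cs c₀ hc₀cs]; exact hz⟩)
                have hdi : d ≠ i := fun h => hi_notin (h ▸ hd)
                by_cases hdj : d = j
                · refine ⟨j, ?_⟩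
                  rw [hP'j]
                  exact Finset.mem_erase.2 ⟨hzu, hdj ▸ hzd⟩
                · exact ⟨d, by rw [hP'other d hdi hdj]; exact hzd⟩
              · exact ⟨c₀, by rw [hP'out c₀ hc₀cs hc₀]; exact hz⟩
    · intro c z hz z' hz'
      by_cases hc : c = i
      · rw [hc, hP'i] at hz hz'
        rcases Finset.mem_insert.1 hz with hzu | hz
        · rcases Finset.mem_insert.1 hz' with hzu' | hz'
          · rw [hzu, hzu']; exact fun h => G.ne_of_adj h rfl
          · rw [hzu]
            intro hadj
            exact (Finset.mem_erase.1 hz').1 (hsolo_u z' (Finset.mem_of_mem_erase hz') hadj)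
        · rcases Finset.mem_insert.1 hz' with hzu' | hz'
          · rw [hzu']
            intro hadj
            exact (Finset.mem_erase.1 hz).1 (hsolo_u z (Finset.mem_of_mem_erase hz) hadj.symm)
          · exact hPind i z (Finset.mem_of_mem_erase hz) z' (Finset.mem_of_mem_erase hz')
      · by_cases hccs : c ∈ cs
        · exact hQ2 c hccs z (hP'sub c hc hz) z' (hP'sub c hc hz')
        · exact hQout_indep c hccs z (hP'sub c hc hz) z' (hP'sub c hc hz')
    · by_cases h0i : (0 : Fin r) = i
      · have h1 : 1 ≤ (P i).card := Finset.card_pos.2 ⟨v, hv⟩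
        have h2 : (P i).card = s - 1 := h0i ▸ hP0
        rw [h0i, hP'i,
          Finset.card_insert_of_notMem (fun h => hu_notin_Pi (Finset.mem_of_mem_erase h)),
          Finset.card_erase_of_mem hv]
        omega
      · rw [hP'out 0 h0_notin h0i]
        exact hP0
    · intro c hc0
      by_cases hci : c = i
      · rw [hci, hP'i,
          Finset.card_insert_of_notMem (fun h => hu_notin_Pi (Finset.mem_of_mem_erase h)),
          Finset.card_erase_of_mem hv]
        have h1 : 1 ≤ (P i).card := Finset.card_pos.2 ⟨v, hv⟩
        have h2 : (P i).card = s := hPs i (hci ▸ hc0)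
        omega
      · by_cases hcj : c = j
        · rw [hcj, hP'j, Finset.card_erase_of_mem huQj, hQ4, hPt_cs j hjmem,
            hPs j (hcj ▸ hc0)]
          omega
        · by_cases hccs : c ∈ cs
          · rw [hP'other c hci hcj, hQ3 c hccs (fun h => hcj h), hPtne c hci, hPs c hc0]
          · rw [hP'out c hccs hci, hPs c hc0]
  have hpres : ∀ X : Fin r, Accessible G P X → X ≠ i → Accessible G P' X := by
    intro X hX hXi
    have hpath : Relation.ReflTransGen (fun p q => Arc G P p q ∧ p ≠ i ∧ q ≠ i) X 0 := by
      by_contra hcon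
      exact hterm.2 X hX ⟨fun h => hXi h.symm, hcon⟩
    clear hX hXi
    induction hpath using Relation.ReflTransGen.head_induction_on with
    | refl => exact Relation.ReflTransGen.refl
    | head hstep htail ih =>
      rename_i a c
      obtain ⟨harc, hai, hci⟩ := hstep
      have hca : Accessible G P c := Relation.ReflTransGen.mono (fun _ _ hh => hh.1) _ _ htail
      have haa : Accessible G P a := Relation.ReflTransGen.head harc hca
      have h1 : P' a = P a := hP'out a (hacc_notin a haa) hai
      have h2 : P' c = P c := hP'out c (hacc_notin c hca) hci
      refine Relation.ReflTransGen.head ?_ ih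
      obtain ⟨hne', t, ht, ht2⟩ := harc
      refine ⟨hne', t, ?_, ?_⟩
      · rw [h1]; exact ht
      · rw [h2]; exact ht2
  have hb'i : b' ≠ i := fun h => hb'B (h ▸ hiA)
  obtain ⟨b'', hb''i, hb''B, hu'P'⟩ :
      ∃ b'' : Fin r, b'' ≠ i ∧ ¬ Accessible G P b'' ∧ u' ∈ P' b'' := by
    by_cases hb'cs : b' ∈ cs
    · obtain ⟨c, hccs, hcq⟩ := (hQ5 u').2 (Or.inr ⟨b', hb'cs, by
        rw [hPt_cs b' hb'cs]; exact hu'b'⟩)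
      have hci : c ≠ i := fun h => hi_notin (h ▸ hccs)
      refine ⟨c, hci, hcsB c hccs, ?_⟩
      by_cases hcj : c = j
      · rw [hcj, hP'j]
        exact Finset.mem_erase.2 ⟨hu'ne, hcj ▸ hcq⟩
      · rw [hP'other c hci hcj]; exact hcq
    · exact ⟨b', hb'i, hb'B, by rw [hP'out b' hb'cs hb'i]; exact hu'b'⟩
  have harcb'' : Arc G P' b'' i := by
    refine ⟨hb''i, u', hu'P', ?_⟩
    intro z hz
    rw [hP'i] at hz
    rcases Finset.mem_insert.1 hz with hzu | hz
    · rw [hzu]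
      exact fun h => hnadj h.symm
    · intro hadj
      exact (Finset.mem_erase.1 hz).1 (hsolo_u' z (Finset.mem_of_mem_erase hz) hadj)
  have hle := hmax P' hP'AE
  by_cases H1 : ∃ v' ∈ (P i).erase v,
      ∃ j₀ : Fin r, j₀ ≠ i ∧ Accessible G P j₀ ∧ ∀ z ∈ P j₀, ¬ G.Adj v' z
  · obtain ⟨v', hv'mem, j₀, hj₀i, hj₀acc, hv'mov⟩ := H1
    have hiA' : Accessible G P' i := by
      refine Relation.ReflTransGen.head ?_ (hpres j₀ hj₀acc hj₀i)
      refine ⟨fun h => hj₀i h.symm, v', ?_, ?_⟩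
      · rw [hP'i]; exact Finset.mem_insert_of_mem hv'mem
      · rw [hP'out j₀ (hacc_notin j₀ hj₀acc) hj₀i]
        exact hv'mov
    have hb''A' : Accessible G P' b'' := Relation.ReflTransGen.head harcb'' hiA'
    have hsubA : insert b'' (Finset.univ.filter fun c => Accessible G P c) ⊆
        Finset.univ.filter fun c => Accessible G P' c := by
      intro c hc
      simp only [Finset.mem_insert, Finset.mem_filter, Finset.mem_univ, true_and] at hc ⊢
      rcases hc with rfl | hc
      · exact hb''A'
      · by_cases hci : c = i
        · rw [hci]; exact hiA'
        · exact hpres c hc hci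
    have hb''notin : b'' ∉ (Finset.univ.filter fun c => Accessible G P c) := by
      simp only [Finset.mem_filter, Finset.mem_univ, true_and]
      exact hb''B
    have hcard := Finset.card_le_card hsubA
    rw [Finset.card_insert_of_notMem hb''notin] at hcard
    have e1 : accCount G P = (Finset.univ.filter fun c => Accessible G P c).card := rfl
    have e2 : accCount G P' = (Finset.univ.filter fun c => Accessible G P' c).card := rfl
    rw [e1, e2] at hle
    omega
  · have ha2 : accCount G P ≤ 2 := by
      rcases hord with ⟨v', hv'Pi, hv'ne, j₀, hj₀i, hj₀acc, hmov⟩ | h2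
      · exact absurd ⟨v', Finset.mem_erase.2 ⟨hv'ne, hv'Pi⟩, j₀, hj₀i, hj₀acc, hmov⟩ H1
      · exact h2
    have e1 : accCount G P = (Finset.univ.filter fun c => Accessible G P c).card := rfl
    have e2 : accCount G P' = (Finset.univ.filter fun c => Accessible G P' c).card := rfl
    by_cases hi0 : i = 0
    · subst hi0
      have honly : ∀ X, Accessible G P X → X = 0 := by
        intro X hX
        by_contra hX0
        refine hterm.2 X hX ⟨fun h => hX0 h.symm, ?_⟩
        intro hp
        have key : ∀ b, Relation.ReflTransGen
            (fun p q => Arc G P p q ∧ p ≠ 0 ∧ q ≠ 0) X b → b = 0 → X = 0 := by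
          intro b hb
          induction hb with
          | refl => exact fun h => h
          | tail hab hbc ih => intro hcc; exact absurd hcc hbc.2.2
        exact hX0 (key 0 hp rfl)
      have ha1 : accCount G P ≤ 1 := by
        have hsub1 : (Finset.univ.filter fun c => Accessible G P c) ⊆ {0} := by
          intro c hc
          simp only [Finset.mem_filter, Finset.mem_univ, true_and] at hc
          simp [honly c hc]
        have := Finset.card_le_card hsub1
        rw [Finset.card_singleton] at this
        rw [e1]
        exact this
      have hb''A' : Accessible G P' b'' := Relation.ReflTransGen.single harcb''
      have h0A' : Accessible G P' 0 := Relation.ReflTransGen.refl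
      have hsub2 : ({0, b''} : Finset (Fin r)) ⊆
          Finset.univ.filter fun c => Accessible G P' c := by
        intro c hc
        simp only [Finset.mem_insert, Finset.mem_singleton] at hc
        simp only [Finset.mem_filter, Finset.mem_univ, true_and]
        rcases hc with rfl | rfl
        · exact h0A'
        · exact hb''A'
      have hcard2 := Finset.card_le_card hsub2
      rw [Finset.card_pair (Ne.symm hb''i)] at hcard2
      rw [e1, e2] at hle
      omega
    · have h0i : (0 : Fin r) ≠ i := fun h => hi0 h.symm
      have hAeq : ({0, i} : Finset (Fin r)) = Finset.univ.filter fun c => Accessible G P c := by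
        apply Finset.eq_of_subset_of_card_le
        · intro c hc
          simp only [Finset.mem_insert, Finset.mem_singleton] at hc
          simp only [Finset.mem_filter, Finset.mem_univ, true_and]
          rcases hc with rfl | rfl
          · exact h0A
          · exact hiA
        · rw [Finset.card_pair h0i]
          rw [e1] at ha2
          exact ha2
      have honly2 : ∀ c, Accessible G P c → c = 0 ∨ c = i := by
        intro c hc
        have hmem : c ∈ ({0, i} : Finset (Fin r)) := by
          rw [hAeq]
          simp only [Finset.mem_filter, Finset.mem_univ, true_and]
          exact hc
        simpa using hmem
      have hv0 : ∀ z ∈ P 0, ¬ G.Adj v z := by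
        by_contra hcon
        push_neg at hcon
        obtain ⟨z0, hz0, hadj0⟩ := hcon
        rcases Relation.ReflTransGen.cases_head hiA with h | ⟨c, harci, hc0⟩
        · exact hi0 h
        · have hcacc : Accessible G P c := hc0
          have hc0' : c = 0 := by
            rcases honly2 c hcacc with h | h
            · exact h
            · exact absurd h.symm harci.1
          obtain ⟨hic, w, hwPi, hwmov⟩ := harci
          rw [hc0'] at hwmov
          by_cases hwv : w = v
          · rw [hwv] at hwmov
            exact hwmov z0 hz0 hadj0
          · exact H1 ⟨w, Finset.mem_erase.2 ⟨hwv, hwPi⟩, 0, h0i, h0A, hwmov⟩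
      obtain ⟨c₁, L', hLeq⟩ := List.exists_cons_of_ne_nil hLne
      have hc₁cs : c₁ ∈ cs := by rw [hcs, hLeq]; simp
      have h0A' : Accessible G P' 0 := Relation.ReflTransGen.refl
      have hk0 : k ≠ 0 := fun h => hkB (h ▸ h0A)
      have harck0 : Arc G P' k 0 := by
        refine ⟨hk0, v, ?_, ?_⟩
        · rw [hP'other k hkne_i hkj]; exact hvQk
        · rw [hP'out 0 h0_notin h0i]
          exact hv0
      have hkA' : Accessible G P' k := Relation.ReflTransGen.head harck0 h0A'
      obtain ⟨t, htQ, htPk, htn⟩ := hQ9 k c₁ L' (by rw [hcs, hLeq])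
      have hc₁i : c₁ ≠ i := fun h => hi_notin (h ▸ hc₁cs)
      have hc₁k : c₁ ≠ k := by
        have hknotin : k ∉ c₁ :: L' := by
          have hnd := hLnd
          rw [hcs, hLeq] at hnd
          exact (List.nodup_cons.1 hnd).1
        exact fun h => hknotin (h ▸ List.mem_cons_self)
      have htu : t ≠ u := by
        rw [hPt_cs k hkmem] at htPk
        exact fun h => (Finset.disjoint_left.1 (hPdisj k j hkj) (h ▸ htPk)) hu
      have harcc₁k : Arc G P' c₁ k := by
        refine ⟨hc₁k, t, ?_, ?_⟩
        · by_cases hc₁j : c₁ = j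
          · rw [hc₁j, hP'j]
            exact Finset.mem_erase.2 ⟨htu, hc₁j ▸ htQ⟩
          · rw [hP'other c₁ hc₁i hc₁j]; exact htQ
        · rw [hP'other k hkne_i hkj]
          exact htn
      have hc₁A' : Accessible G P' c₁ := Relation.ReflTransGen.head harcc₁k hkA'
      have hc₁0 : c₁ ≠ 0 := fun h => hcsB c₁ hc₁cs (h ▸ h0A)
      have hsub3 : ({0, k, c₁} : Finset (Fin r)) ⊆
          Finset.univ.filter fun c => Accessible G P' c := by
        intro c hc
        simp only [Finset.mem_insert, Finset.mem_singleton] at hc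
        simp only [Finset.mem_filter, Finset.mem_univ, true_and]
        rcases hc with rfl | rfl | rfl
        · exact h0A'
        · exact hkA'
        · exact hc₁A'
      have hcard3 := Finset.card_le_card hsub3
      have hc3 : ({0, k, c₁} : Finset (Fin r)).card = 3 := by
        rw [Finset.card_insert_of_notMem (by simp [Ne.symm hk0, Ne.symm hc₁0]),
          Finset.card_pair (Ne.symm hc₁k)]
      rw [hc3] at hcard3
      rw [e1, e2] at hle
      omega

end Equitable
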